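/- Let d ≥ 2 and p ≥ 2 be integers with p(d−2) < d, and let p_t(x) = (2πt)^{−d/2} exp(−|x|²/(2t)) be the d-dimensional heat kernel. Then ∫_{ℝ^d} (∫_0^∞ e^{-t} p_t(x) dt)^p dx ≤ (2π)^{−d(p−1)/2} p^{−d/2} (∫_0^∞ t^{−d(p−1)/(2p)} e^{-t} dt)^p < ∞. -/

import Mathlib

open MeasureTheory ENNReal Real Set

lemma aux_integrable_gauss (d : ℕ) {b : ℝ} (hb : 0 < b) :
    Integrable (fun x : EuclideanSpace ℝ (Fin d) => Real.exp (-b * ‖x‖ ^ 2)) := by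
  have h := (GaussianFourier.integrable_cexp_neg_mul_sq_norm_add
    (b := (b : ℂ)) (by simpa using hb) 0 (0 : EuclideanSpace ℝ (Fin d))).norm
  refine h.congr ?_
  filter_upwards with x
  simp [Complex.norm_exp]
  left
  norm_cast

lemma aux_lintegral_gauss (d : ℕ) {b : ℝ} (hb : 0 < b) :
    ∫⁻ x : EuclideanSpace ℝ (Fin d), ENNReal.ofReal (Real.exp (-b * ‖x‖ ^ 2))
      = ENNReal.ofReal ((π / b) ^ ((d : ℝ) / 2)) := by
  rw [← ofReal_integral_eq_lintegral_ofReal (aux_integrable_gauss d hb)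
    (Filter.Eventually.of_forall fun x => (Real.exp_pos _).le)]
  rw [GaussianFourier.integral_rexp_neg_mul_sq_norm hb]
  congr 2
  simp [finrank_euclideanSpace]

lemma aux_slice (d p : ℕ) (hp : 2 ≤ p) {t : ℝ} (ht : 0 < t) :
    ∫⁻ x : EuclideanSpace ℝ (Fin d),
        ENNReal.ofReal (Real.exp (-t) * (2 * π * t) ^ (-(d : ℝ) / 2) *
          Real.exp (-(‖x‖ ^ 2) / (2 * t))) ^ (p : ℝ)
      = ENNReal.ofReal
          (((2 * π) ^ (-((d : ℝ) * ((p : ℝ) - 1)) / (2 * p)) * (p : ℝ) ^ (-(d : ℝ) / (2 * p)) *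
            (t ^ (-((d : ℝ) * ((p : ℝ) - 1)) / (2 * p)) * Real.exp (-t))) ^ (p : ℝ)) := by
  have hPpos : (0 : ℝ) < p := Nat.cast_pos.mpr (by omega)
  have h2π : (0 : ℝ) < 2 * π := by positivity
  have h2πt : (0 : ℝ) < 2 * π * t := by positivity
  have hb : (0 : ℝ) < (p : ℝ) / (2 * t) := by positivity
  have step1 : ∀ x : EuclideanSpace ℝ (Fin d),
      ENNReal.ofReal (Real.exp (-t) * (2 * π * t) ^ (-(d : ℝ) / 2) *
          Real.exp (-(‖x‖ ^ 2) / (2 * t))) ^ (p : ℝ)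
        = ENNReal.ofReal (Real.exp (-t) ^ (p : ℝ) * ((2 * π * t) ^ (-(d : ℝ) / 2)) ^ (p : ℝ))
          * ENNReal.ofReal (Real.exp (-((p : ℝ) / (2 * t)) * ‖x‖ ^ 2)) := by
    intro x
    rw [ENNReal.ofReal_rpow_of_nonneg (by positivity) hPpos.le, ← ENNReal.ofReal_mul (by positivity)]
    congr 1
    rw [Real.mul_rpow (by positivity) (Real.exp_pos _).le,
        Real.mul_rpow (Real.exp_pos _).le (by positivity),
        show Real.exp (-(‖x‖ ^ 2) / (2 * t)) ^ (p : ℝ)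
            = Real.exp (-((p : ℝ) / (2 * t)) * ‖x‖ ^ 2) from by
          rw [← Real.exp_mul]; congr 1; field_simp]
  simp_rw [step1]
  rw [lintegral_const_mul' _ _ ENNReal.ofReal_ne_top, aux_lintegral_gauss d hb,
    ← ENNReal.ofReal_mul (by positivity)]
  congr 1
  have hdiv : π / ((p : ℝ) / (2 * t)) = 2 * π * t / p := by field_simp
  rw [hdiv]
  have hβ : -((d : ℝ) * ((p : ℝ) - 1)) / (2 * p) * p = -(d : ℝ) / 2 * p + (d : ℝ) / 2 := by
    field_simp; ring
  have hγ : -(d : ℝ) / (2 * p) * p = -((d : ℝ) / 2) := by field_simp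
  have e1 : ((2 * π * t : ℝ) ^ (-(d : ℝ) / 2)) ^ (p : ℝ)
      = (2 * π) ^ (-(d : ℝ) / 2 * p) * t ^ (-(d : ℝ) / 2 * p) := by
    rw [← Real.rpow_mul h2πt.le, Real.mul_rpow h2π.le ht.le]
  have e2 : ((2 * π * t) / (p : ℝ)) ^ ((d : ℝ) / 2)
      = (2 * π) ^ ((d : ℝ) / 2) * t ^ ((d : ℝ) / 2) * ((p : ℝ) ^ ((d : ℝ) / 2))⁻¹ := by
    rw [Real.div_rpow h2πt.le hPpos.le, Real.mul_rpow h2π.le ht.le, div_eq_mul_inv]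
  have e3 : ((2 * π : ℝ) ^ (-((d : ℝ) * ((p : ℝ) - 1)) / (2 * p)) * (p : ℝ) ^ (-(d : ℝ) / (2 * p)) *
        (t ^ (-((d : ℝ) * ((p : ℝ) - 1)) / (2 * p)) * Real.exp (-t))) ^ (p : ℝ)
      = ((2 * π) ^ (-(d : ℝ) / 2 * p) * (2 * π) ^ ((d : ℝ) / 2)) * ((p : ℝ) ^ ((d : ℝ) / 2))⁻¹ *
        ((t ^ (-(d : ℝ) / 2 * p) * t ^ ((d : ℝ) / 2)) * Real.exp (-t) ^ (p : ℝ)) := by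
    rw [Real.mul_rpow
          (mul_nonneg (Real.rpow_nonneg h2π.le _) (Real.rpow_nonneg hPpos.le _))
          (mul_nonneg (Real.rpow_nonneg ht.le _) (Real.exp_pos _).le),
        Real.mul_rpow (Real.rpow_nonneg h2π.le _) (Real.rpow_nonneg hPpos.le _),
        Real.mul_rpow (Real.rpow_nonneg ht.le _) (Real.exp_pos _).le,
        ← Real.rpow_mul h2π.le, ← Real.rpow_mul hPpos.le, ← Real.rpow_mul ht.le,
        hβ, hγ, Real.rpow_add h2π, Real.rpow_add ht, Real.rpow_neg hPpos.le]
  rw [e1, e2, e3]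
  ring

/-- For `d ≥ 2`, `p ≥ 2` with `p(d−2) < d`, and the `d`-dimensional heat kernel
`p_t(x) = (2πt)^{−d/2} exp(−|x|²/(2t))`, one has
`∫ (∫_0^∞ e^{-t} p_t(x) dt)^p dx ≤ (2π)^{−d(p−1)/2} p^{−d/2}
  (∫_0^∞ t^{−d(p−1)/(2p)} e^{-t} dt)^p < ∞`. -/
theorem heat_kernel_resolvent_Lp_bound (d p : ℕ) (hd : 2 ≤ d) (hp : 2 ≤ p)
    (hdp : p * (d - 2) < d) :
    (∫⁻ x : EuclideanSpace ℝ (Fin d),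
        (∫⁻ t in Set.Ioi (0 : ℝ), ENNReal.ofReal
          (Real.exp (-t) * (2 * Real.pi * t) ^ (-(d : ℝ) / 2) *
            Real.exp (-(‖x‖ ^ 2) / (2 * t)))) ^ p)
      ≤ ENNReal.ofReal ((2 * Real.pi) ^ (-((d : ℝ) * ((p : ℝ) - 1)) / 2) *
          (p : ℝ) ^ (-(d : ℝ) / 2) *
          (∫ t in Set.Ioi (0 : ℝ),
            t ^ (-((d : ℝ) * ((p : ℝ) - 1)) / (2 * p)) * Real.exp (-t)) ^ p) ∧
    (∫⁻ x : EuclideanSpace ℝ (Fin d),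
        (∫⁻ t in Set.Ioi (0 : ℝ), ENNReal.ofReal
          (Real.exp (-t) * (2 * Real.pi * t) ^ (-(d : ℝ) / 2) *
            Real.exp (-(‖x‖ ^ 2) / (2 * t)))) ^ p) < ⊤ := by
  -- abbreviations
  set E := EuclideanSpace ℝ (Fin d)
  have hPpos : (0 : ℝ) < p := Nat.cast_pos.mpr (by omega)
  have hP1 : (1 : ℝ) < p := by exact_mod_cast Nat.one_lt_cast.mpr (by omega : 1 < p)
  set α : ℝ := -((d : ℝ) * ((p : ℝ) - 1)) / (2 * p) with hα_def
  set c : ℝ → ℝ := fun t =>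
    (2 * π) ^ α * (p : ℝ) ^ (-(d : ℝ) / (2 * p)) * (t ^ α * Real.exp (-t)) with hc_def
  have hc_pos : ∀ t : ℝ, 0 < t → 0 < c t := fun t ht => by
    have : (0:ℝ) < 2 * π := by positivity
    exact mul_pos (mul_pos (Real.rpow_pos_of_pos this _) (Real.rpow_pos_of_pos hPpos _))
      (mul_pos (Real.rpow_pos_of_pos ht _) (Real.exp_pos _))
  -- the exponent condition
  have hα1 : 0 < 1 + α := by
    have hcast : (p : ℝ) * ((d : ℝ) - 2) < (d : ℝ) := by
      have : ((p * (d - 2) : ℕ) : ℝ) < (d : ℕ) := by exact_mod_cast hdp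
      rwa [Nat.cast_mul, Nat.cast_sub hd] at this
    rw [hα_def, neg_div]
    have h2p : (0:ℝ) < 2 * p := by positivity
    have hlt : ((d:ℝ) * ((p:ℝ) - 1)) / (2 * (p:ℝ)) < 1 := (div_lt_one h2p).mpr (by nlinarith)
    linarith
  -- integrability of c on (0, ∞)
  have hGamma : IntegrableOn (fun t : ℝ => t ^ α * Real.exp (-t)) (Ioi 0) := by
    have h := Real.GammaIntegral_convergent hα1
    refine h.congr_fun (fun t ht => ?_) measurableSet_Ioi
    simp [mul_comm, add_sub_cancel_left]
  have hIntc : IntegrableOn c (Ioi 0) := by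
    simpa [hc_def, mul_assoc, IntegrableOn] using hGamma.const_mul ((2 * π) ^ α * (p : ℝ) ^ (-(d : ℝ) / (2 * p)))
  set I₀ : ℝ := ∫ t in Ioi (0:ℝ), c t with hI₀_def
  have hI₀nn : 0 ≤ I₀ :=
    setIntegral_nonneg measurableSet_Ioi fun t ht => (hc_pos t ht).le
  have hB : (∫⁻ t in Ioi (0:ℝ), ENNReal.ofReal (c t)) = ENNReal.ofReal I₀ := by
    rw [← ofReal_integral_eq_lintegral_ofReal hIntc
      ((ae_restrict_iff' measurableSet_Ioi).2 (ae_of_all _ fun t ht => (hc_pos t ht).le))]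
  -- conjugate exponent
  set q : ℝ := (p : ℝ) / ((p : ℝ) - 1) with hq_def
  have hpq : ((p : ℝ)).HolderConjugate q :=
    (Real.holderConjugate_iff_eq_conjExponent hP1).mpr rfl
  have hq0 : q ≠ 0 := hpq.symm.ne_zero
  have h1qp : 1 / q * (p : ℝ) = (p : ℝ) - 1 := by
    rw [hq_def]; field_simp
  -- pointwise Hölder bound in x
  set g : ℝ → E → ℝ≥0∞ := fun t x => ENNReal.ofReal
    (Real.exp (-t) * (2 * π * t) ^ (-(d : ℝ) / 2) * Real.exp (-(‖x‖ ^ 2) / (2 * t))) with hg_def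
  set B : ℝ≥0∞ := ∫⁻ t in Ioi (0:ℝ), ENNReal.ofReal (c t) with hB_def
  have hcE_ne_zero : ∀ t ∈ Ioi (0:ℝ), ENNReal.ofReal (c t) ≠ 0 := fun t ht =>
    (ENNReal.ofReal_pos.mpr (hc_pos t ht)).ne'
  have key : ∀ x : E, (∫⁻ t in Ioi (0:ℝ), g t x) ^ (p : ℝ)
      ≤ (∫⁻ t in Ioi (0:ℝ), g t x ^ (p : ℝ) * ENNReal.ofReal (c t) ^ (1 - (p : ℝ)))
        * B ^ ((p : ℝ) - 1) := by
    intro x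
    have h0 : (∫⁻ t in Ioi (0:ℝ), g t x)
        = ∫⁻ t in Ioi (0:ℝ),
            (fun t => g t x * ENNReal.ofReal (c t) ^ (-(1/q)))  t *
            (fun t => ENNReal.ofReal (c t) ^ (1/q)) t := by
      refine (setLIntegral_congr_fun measurableSet_Ioi
        (fun t ht => ?_)).symm
      simp only
      rw [mul_assoc, ← ENNReal.rpow_add _ _ (hcE_ne_zero t ht) ENNReal.ofReal_ne_top,
        neg_add_cancel, ENNReal.rpow_zero, mul_one]
    have hu : Measurable fun t => g t x * ENNReal.ofReal (c t) ^ (-(1/q)) := by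
      rw [hg_def, hc_def]; fun_prop
    have hv : Measurable fun t => ENNReal.ofReal (c t) ^ (1/q) := by
      rw [hc_def]; fun_prop
    have hH := ENNReal.lintegral_mul_le_Lp_mul_Lq (volume.restrict (Ioi (0:ℝ))) hpq
      hu.aemeasurable hv.aemeasurable
    simp only [Pi.mul_apply] at hH
    rw [← h0] at hH
    have hA : (∫⁻ t in Ioi (0:ℝ), (g t x * ENNReal.ofReal (c t) ^ (-(1/q))) ^ (p:ℝ))
        = ∫⁻ t in Ioi (0:ℝ), g t x ^ (p : ℝ) * ENNReal.ofReal (c t) ^ (1 - (p : ℝ)) := by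
      refine setLIntegral_congr_fun measurableSet_Ioi (fun t ht => ?_)
      rw [ENNReal.mul_rpow_of_nonneg _ _ hPpos.le, ← ENNReal.rpow_mul,
        show -(1/q) * (p:ℝ) = 1 - (p:ℝ) from by rw [neg_mul, h1qp]; ring]
    have hV : (∫⁻ t in Ioi (0:ℝ), (ENNReal.ofReal (c t) ^ (1/q)) ^ q) = B := by
      rw [hB_def]
      refine setLIntegral_congr_fun measurableSet_Ioi (fun t ht => ?_)
      rw [← ENNReal.rpow_mul, one_div, inv_mul_cancel₀ hq0, ENNReal.rpow_one]
    rw [hA, hV] at hH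
    calc (∫⁻ t in Ioi (0:ℝ), g t x) ^ (p:ℝ)
        ≤ ((∫⁻ t in Ioi (0:ℝ), g t x ^ (p:ℝ) * ENNReal.ofReal (c t) ^ (1 - (p:ℝ))) ^ (1/(p:ℝ))
            * B ^ (1/q)) ^ (p:ℝ) := ENNReal.rpow_le_rpow hH hPpos.le
      _ = (∫⁻ t in Ioi (0:ℝ), g t x ^ (p:ℝ) * ENNReal.ofReal (c t) ^ (1 - (p:ℝ)))
            * B ^ ((p:ℝ) - 1) := by
          rw [ENNReal.mul_rpow_of_nonneg _ _ hPpos.le, ← ENNReal.rpow_mul, ← ENNReal.rpow_mul,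
            one_div, inv_mul_cancel₀ hPpos.ne', ENNReal.rpow_one, h1qp]
  -- measurability for Tonelli
  have hswap_meas : AEMeasurable (Function.uncurry fun (x : E) (t : ℝ) =>
      g t x ^ (p : ℝ) * ENNReal.ofReal (c t) ^ (1 - (p : ℝ)))
      ((volume : Measure E).prod (volume.restrict (Ioi (0:ℝ)))) := by
    apply Measurable.aemeasurable
    rw [hg_def, hc_def]; fun_prop
  -- the double integral
  have hdouble : (∫⁻ x : E, ∫⁻ t in Ioi (0:ℝ),
      g t x ^ (p : ℝ) * ENNReal.ofReal (c t) ^ (1 - (p : ℝ))) = B := by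
    rw [lintegral_lintegral_swap hswap_meas]
    rw [hB_def]
    refine setLIntegral_congr_fun measurableSet_Ioi (fun t ht => ?_)
    rw [lintegral_mul_const' _ _ (by
      rw [ENNReal.ofReal_rpow_of_pos (hc_pos t ht)]; exact ENNReal.ofReal_ne_top)]
    rw [hg_def]
    rw [aux_slice d p hp ht]
    rw [← ENNReal.ofReal_rpow_of_pos (hc_pos t ht),
      ← ENNReal.rpow_add _ _ (hcE_ne_zero t ht) ENNReal.ofReal_ne_top,
      show (p:ℝ) + (1 - (p:ℝ)) = 1 from by ring, ENNReal.rpow_one]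
  -- final computation of the constant
  have hconst : ENNReal.ofReal I₀ * ENNReal.ofReal I₀ ^ ((p:ℝ) - 1)
      = ENNReal.ofReal ((2 * π) ^ (-((d : ℝ) * ((p : ℝ) - 1)) / 2) *
          (p : ℝ) ^ (-(d : ℝ) / 2) *
          (∫ t in Ioi (0:ℝ), t ^ (-((d : ℝ) * ((p : ℝ) - 1)) / (2 * p)) * Real.exp (-t)) ^ p) := by
    rw [ENNReal.ofReal_rpow_of_nonneg hI₀nn (by linarith), ← ENNReal.ofReal_mul hI₀nn]
    congr 1
    have hpow : I₀ * I₀ ^ ((p:ℝ) - 1) = I₀ ^ (p : ℕ) := by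
      rcases eq_or_lt_of_le hI₀nn with h | h
      · rw [← h]
        rw [Real.zero_rpow (by intro hc0; rw [sub_eq_zero] at hc0; exact (by linarith : (1:ℝ) < p).ne hc0.symm)]
        simp [zero_pow (by omega : p ≠ 0)]
      · rw [show I₀ * I₀ ^ ((p:ℝ) - 1) = I₀ ^ ((1:ℝ) + ((p:ℝ) - 1)) from by
          rw [Real.rpow_add h, Real.rpow_one],
          show (1:ℝ) + ((p:ℝ) - 1) = ((p:ℕ):ℝ) from by ring,
          Real.rpow_natCast]
    rw [hpow, hI₀_def, hc_def]
    simp only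
    rw [integral_const_mul]
    rw [mul_pow, mul_pow]
    have ha : (((2 * π : ℝ) ^ α) ^ (p:ℕ)) = (2 * π) ^ (-((d : ℝ) * ((p : ℝ) - 1)) / 2) := by
      rw [← Real.rpow_natCast ((2 * π : ℝ) ^ α) p, ← Real.rpow_mul (by positivity)]
      congr 1
      rw [hα_def]; field_simp
    have hb : (((p : ℝ) ^ (-(d : ℝ) / (2 * p))) ^ (p:ℕ)) = (p : ℝ) ^ (-(d : ℝ) / 2) := by
      rw [← Real.rpow_natCast ((p : ℝ) ^ (-(d : ℝ) / (2 * p))) p, ← Real.rpow_mul hPpos.le]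
      congr 1
      field_simp
    rw [ha, hb, hα_def]
  -- putting everything together
  have main : (∫⁻ x : E, (∫⁻ t in Ioi (0:ℝ), g t x) ^ p)
      ≤ ENNReal.ofReal ((2 * π) ^ (-((d : ℝ) * ((p : ℝ) - 1)) / 2) *
          (p : ℝ) ^ (-(d : ℝ) / 2) *
          (∫ t in Ioi (0:ℝ), t ^ (-((d : ℝ) * ((p : ℝ) - 1)) / (2 * p)) * Real.exp (-t)) ^ p) := by
    have hBfin : B ^ ((p:ℝ) - 1) ≠ ⊤ := by
      rw [hB]
      exact ENNReal.rpow_ne_top_of_nonneg (by linarith) ENNReal.ofReal_ne_top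
    calc (∫⁻ x : E, (∫⁻ t in Ioi (0:ℝ), g t x) ^ p)
        = ∫⁻ x : E, (∫⁻ t in Ioi (0:ℝ), g t x) ^ (p:ℝ) := by
          simp_rw [ENNReal.rpow_natCast]
      _ ≤ ∫⁻ x : E, (∫⁻ t in Ioi (0:ℝ), g t x ^ (p : ℝ) * ENNReal.ofReal (c t) ^ (1 - (p : ℝ)))
            * B ^ ((p:ℝ) - 1) := lintegral_mono key
      _ = (∫⁻ x : E, ∫⁻ t in Ioi (0:ℝ), g t x ^ (p : ℝ) * ENNReal.ofReal (c t) ^ (1 - (p : ℝ)))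
            * B ^ ((p:ℝ) - 1) := lintegral_mul_const' _ _ hBfin
      _ = B * B ^ ((p:ℝ) - 1) := by rw [hdouble]
      _ = ENNReal.ofReal ((2 * π) ^ (-((d : ℝ) * ((p : ℝ) - 1)) / 2) *
          (p : ℝ) ^ (-(d : ℝ) / 2) *
          (∫ t in Ioi (0:ℝ), t ^ (-((d : ℝ) * ((p : ℝ) - 1)) / (2 * p)) * Real.exp (-t)) ^ p) := by
          rw [hB, hconst]
  constructor
  · exact main
  · exact lt_of_le_of_lt main ENNReal.ofReal_lt_top
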